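/- For all positive integers n, 2^n − 2^{⌊n/2⌋} − n·2^{⌊n/3⌋} ≤ f(n) ≤ 2^n − 2^{⌊n/2⌋}. -/
import Mathlib

/-- `f n` is the number of relatively prime subsets of `{1,2,...,n}`, i.e. the
number of nonempty subsets `A` of `{1,...,n}` with `gcd(A) = 1`. -/
def f (n : ℕ) : ℕ :=
  ((Finset.Icc 1 n).powerset.filter (fun A => A.Nonempty ∧ A.gcd id = 1)).card

open Finset

private def bad (n : ℕ) : Finset (Finset ℕ) :=
  (Icc 1 n).powerset.filter (fun A => A.Nonempty ∧ A.gcd id ≠ 1)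

private lemma card_mult (n d : ℕ) : ((Finset.Icc 1 n).filter (d ∣ ·)).card = n / d := by
  rw [show Finset.Icc 1 n = Finset.Ioc 0 n by ext x; simp; omega]
  exact Nat.Ioc_filter_dvd_card_eq_div n d

private lemma pow_filter_ne (s : Finset ℕ) :
    (s.powerset.filter (fun A => A.Nonempty)).card + 1 = 2 ^ s.card := by
  have h := card_filter_add_card_filter_not (s := s.powerset) (p := fun A => A.Nonempty)
  have h2 : s.powerset.filter (fun A => ¬ A.Nonempty) = {∅} := by
    ext A; simp [Finset.not_nonempty_iff_eq_empty]
    intro h; subst h; exact empty_subset s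
  rw [h2, card_singleton] at h
  rw [h, card_powerset]

private lemma split (n : ℕ) : f n + (bad n).card + 1 = 2 ^ n := by
  have h := card_filter_add_card_filter_not
    (s := (Icc 1 n).powerset.filter (fun A => A.Nonempty)) (p := fun A => A.gcd id = 1)
  rw [filter_filter, filter_filter] at h
  have hf : f n = (((Icc 1 n).powerset).filter (fun A => A.Nonempty ∧ A.gcd id = 1)).card := rfl
  have hb : (bad n).card = (((Icc 1 n).powerset).filter (fun A => A.Nonempty ∧ A.gcd id ≠ 1)).card := rfl
  rw [hf, hb, h]
  have := pow_filter_ne (Icc 1 n)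
  rwa [Nat.card_Icc, Nat.add_sub_cancel] at this

-- lower bound on bad: nonempty subsets of the evens
private lemma bad_lower (n : ℕ) : 2 ^ (n / 2) ≤ (bad n).card + 1 := by
  have hsub : ((Icc 1 n).filter (2 ∣ ·)).powerset.filter (fun A => A.Nonempty) ⊆ bad n := by
    intro A hA
    simp only [mem_filter, mem_powerset] at hA
    obtain ⟨hAs, hAne⟩ := hA
    have hdvd : ∀ b ∈ A, 2 ∣ id b := fun b hb => (mem_filter.mp (hAs hb)).2
    refine mem_filter.mpr ⟨mem_powerset.mpr (hAs.trans (filter_subset _ _)), hAne, ?_⟩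
    intro h1
    have : (2 : ℕ) ∣ 1 := h1 ▸ Finset.dvd_gcd hdvd
    omega
  calc 2 ^ (n / 2) = (((Icc 1 n).filter (2 ∣ ·)).powerset.filter (fun A => A.Nonempty)).card + 1 := by
        rw [pow_filter_ne, card_mult]
    _ ≤ (bad n).card + 1 := by
        exact Nat.add_le_add_right (card_le_card hsub) 1

-- upper bound on bad via biUnion over possible gcds
private lemma bad_upper (n : ℕ) :
    (bad n).card ≤ ∑ d ∈ Icc 2 n, ((2:ℕ) ^ (n / d) - 1) := by
  have hsub : bad n ⊆ (Icc 2 n).biUnion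
      (fun d => ((Icc 1 n).filter (d ∣ ·)).powerset.filter (fun A => A.Nonempty)) := by
    intro A hA
    simp only [bad, mem_filter, mem_powerset] at hA
    obtain ⟨hAs, hAne, hg⟩ := hA
    obtain ⟨a, ha⟩ := hAne
    have hga : A.gcd id ∣ a := Finset.gcd_dvd ha
    have ha1 : 1 ≤ a ∧ a ≤ n := by have := hAs ha; simpa using this
    have hgpos : 0 < A.gcd id := by
      rcases Nat.eq_zero_or_pos (A.gcd id) with h | h
      · rw [h] at hga; omega
      · exact h
    have hgle : A.gcd id ≤ n := (Nat.le_of_dvd (by omega) hga).trans ha1.2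
    refine mem_biUnion.mpr ⟨A.gcd id, mem_Icc.mpr ⟨by omega, hgle⟩, ?_⟩
    refine mem_filter.mpr ⟨mem_powerset.mpr ?_, ⟨a, ha⟩⟩
    intro x hx
    exact mem_filter.mpr ⟨hAs hx, Finset.gcd_dvd hx⟩
  calc (bad n).card ≤ _ := card_le_card hsub
    _ ≤ ∑ d ∈ Icc 2 n, (((Icc 1 n).filter (d ∣ ·)).powerset.filter (fun A => A.Nonempty)).card :=
        card_biUnion_le
    _ = ∑ d ∈ Icc 2 n, ((2:ℕ) ^ (n / d) - 1) := by
        refine Finset.sum_congr rfl fun d _ => ?_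
        have := pow_filter_ne ((Icc 1 n).filter (d ∣ ·))
        rw [card_mult] at this
        omega

private lemma sum_bound (n : ℕ) (hn : 0 < n) :
    (∑ d ∈ Icc 2 n, ((2:ℤ) ^ (n / d) - 1)) ≤ 2 ^ (n / 2) - 1 + n * 2 ^ (n / 3) := by
  rcases Nat.lt_or_ge n 2 with h | h
  · interval_cases n
    simp
  · rw [show Icc 2 n = insert 2 (Icc 3 n) by ext x; simp; omega,
        Finset.sum_insert (by simp)]
    have hterm : ∀ d ∈ Icc 3 n, (2:ℤ) ^ (n / d) - 1 ≤ 2 ^ (n / 3) := by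
      intro d hd
      have hd3 : 3 ≤ d := (mem_Icc.mp hd).1
      have h1 : n / d ≤ n / 3 := Nat.div_le_div_left hd3 (by norm_num)
      have h2 := pow_le_pow_right₀ (by norm_num : (1:ℤ) ≤ 2) h1
      linarith
    have hs := Finset.sum_le_card_nsmul (Icc 3 n) _ ((2:ℤ) ^ (n / 3)) hterm
    rw [Nat.card_Icc] at hs
    have hcard : ((n + 1 - 3 : ℕ) : ℤ) ≤ n := by
      have : n + 1 - 3 ≤ n := by omega
      exact_mod_cast this
    have hsm : ((n + 1 - 3 : ℕ)) • ((2:ℤ) ^ (n / 3)) ≤ (n : ℤ) * 2 ^ (n / 3) := by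
      rw [nsmul_eq_mul]
      exact mul_le_mul_of_nonneg_right hcard (by positivity)
    linarith

theorem f_bounds (n : ℕ) (hn : 0 < n) :
    (2 ^ n - 2 ^ (n / 2) - n * 2 ^ (n / 3) : ℤ) ≤ (f n : ℤ) ∧
      (f n : ℤ) ≤ 2 ^ n - 2 ^ (n / 2) := by
  have hsplit : ((f n : ℤ)) + (bad n).card + 1 = 2 ^ n := by
    exact_mod_cast congrArg (Nat.cast : ℕ → ℤ) (split n)
  have hlow : (2:ℤ) ^ (n / 2) ≤ (bad n).card + 1 := by exact_mod_cast bad_lower n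
  have hup : ((bad n).card : ℤ) ≤ ∑ d ∈ Icc 2 n, (((2:ℕ) ^ (n / d) - 1 : ℕ) : ℤ) := by
    exact_mod_cast bad_upper n
  have hsum : (∑ d ∈ Icc 2 n, (((2:ℕ) ^ (n / d) - 1 : ℕ) : ℤ)) ≤ 2 ^ (n / 2) - 1 + n * 2 ^ (n / 3) := by
    refine le_trans (le_of_eq (Finset.sum_congr rfl fun d _ => ?_)) (sum_bound n hn)
    rw [Nat.cast_sub Nat.one_le_two_pow]
    push_cast
    ring
  constructor
  · linarith [hsplit, hup, hsum]
  · linarith [hsplit, hlow]
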